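/- The rotational shape functions Ny2 and Ny3 satisfy the Kronecker delta property: Ny2(Pj) = Ny3(Pj) = 0 for j = 1,2,3; ∂Ny2/∂y(Pj) = ∂Ny3/∂y(Pj) = 0 for j = 1,2,3; ∂Ny2/∂x(P2) = -1 and ∂Ny2/∂x(P1) = ∂Ny2/∂x(P3) = 0; ∂Ny3/∂x(P3) = -1 and ∂Ny3/∂x(P1) = ∂Ny3/∂x(P2) = 0. -/

import Mathlib

noncomputable section

/-- Area coordinate `L1(x,y) = 1 - x/a - y/b`. -/
def L1 (a b : ℝ) (x y : ℝ) : ℝ := 1 - x / a - y / b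

/-- Area coordinate `L2(x,y) = x/a - (1/h - 1/b)·y`. -/
def L2 (a h b : ℝ) (x y : ℝ) : ℝ := x / a - (1 / h - 1 / b) * y

/-- Area coordinate `L3(x,y) = y/h`. -/
def L3 (h : ℝ) (x y : ℝ) : ℝ := y / h

/-- Rotational shape function
`Ny2 = (a·h/b)·(L2²L3 + ½L1L2L3) + a·(L1L2² + ½L1L2L3)`. -/
def Ny2 (a h b : ℝ) (x y : ℝ) : ℝ :=
  (a * h / b) * ((L2 a h b x y) ^ 2 * L3 h x y
      + (1 / 2) * L1 a b x y * L2 a h b x y * L3 h x y)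
    + a * (L1 a b x y * (L2 a h b x y) ^ 2
      + (1 / 2) * L1 a b x y * L2 a h b x y * L3 h x y)

/-- Rotational shape function
`Ny3 = a·(1 - h/b)·(L3²L1 + ½L1L2L3) - (a·h/b)·(L2L3² + ½L1L2L3)`. -/
def Ny3 (a h b : ℝ) (x y : ℝ) : ℝ :=
  a * (1 - h / b) * ((L3 h x y) ^ 2 * L1 a b x y
      + (1 / 2) * L1 a b x y * L2 a h b x y * L3 h x y)
    - (a * h / b) * (L2 a h b x y * (L3 h x y) ^ 2
      + (1 / 2) * L1 a b x y * L2 a h b x y * L3 h x y)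

/-- Partial derivative in the first variable. -/
def pdx (f : ℝ → ℝ → ℝ) (x y : ℝ) : ℝ := deriv (fun t => f t y) x

/-- Partial derivative in the second variable. -/
def pdy (f : ℝ → ℝ → ℝ) (x y : ℝ) : ℝ := deriv (fun t => f x t) y

section helpers

variable {a h b : ℝ}

lemma hu_x (a b : ℝ) (x y : ℝ) : HasDerivAt (fun t => L1 a b t y) (-(1/a)) x := by
  simpa [L1] using (((hasDerivAt_id x).div_const a).const_sub 1).sub_const (y/b)

lemma hv_x (a h b : ℝ) (x y : ℝ) : HasDerivAt (fun t => L2 a h b t y) (1/a) x := by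
  simpa [L2] using ((hasDerivAt_id x).div_const a).sub_const ((1/h - 1/b)*y)

lemma hw_x (h : ℝ) (x y : ℝ) : HasDerivAt (fun t => L3 h t y) 0 x := by
  simp only [L3]; exact hasDerivAt_const x (y/h)

lemma hu_y (a b : ℝ) (x y : ℝ) : HasDerivAt (fun t => L1 a b x t) (-(1/b)) y := by
  simpa [L1] using (((hasDerivAt_id y).div_const b).const_sub (1 - x/a))

lemma hv_y (a h b : ℝ) (x y : ℝ) :
    HasDerivAt (fun t => L2 a h b x t) (-(1/h - 1/b)) y := by
  simpa [L2, mul_comm] using (((hasDerivAt_id y).const_mul (1/h - 1/b)).const_sub (x/a))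

lemma hw_y (h : ℝ) (x y : ℝ) : HasDerivAt (fun t => L3 h x t) (1/h) y := by
  simpa [L3] using (hasDerivAt_id y).div_const h

lemma pdx_Ny2 (a h b x y : ℝ) (ha : a ≠ 0) (hb : b ≠ 0) :
    pdx (Ny2 a h b) x y =
      (a * h / b) * ((2 * L2 a h b x y * L3 h x y) / a
          + (L1 a b x y * L3 h x y - L2 a h b x y * L3 h x y) / (2 * a))
        + a * (-(L2 a h b x y ^ 2) / a + (2 * L1 a b x y * L2 a h b x y) / a
          + (L1 a b x y * L3 h x y - L2 a h b x y * L3 h x y) / (2 * a)) := by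
  have hu := hu_x a b x y
  have hv := hv_x a h b x y
  have hw := hw_x h x y
  have hB := ((hu.const_mul (1/2 : ℝ)).mul hv).mul hw
  have H := ((((hv.pow 2).mul hw).add hB).const_mul (a*h/b)).add
    (((hu.mul (hv.pow 2)).add hB).const_mul a)
  rw [pdx]
  have H' : HasDerivAt (fun t => Ny2 a h b t y) _ x := H
  rw [H'.deriv]
  norm_num
  field_simp
  ring

lemma pdx_Ny3 (a h b x y : ℝ) (ha : a ≠ 0) (hb : b ≠ 0) :
    pdx (Ny3 a h b) x y =
      a * (1 - h / b) * (-(L3 h x y ^ 2) / a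
          + (L1 a b x y * L3 h x y - L2 a h b x y * L3 h x y) / (2 * a))
        - (a * h / b) * ((L3 h x y ^ 2) / a
          + (L1 a b x y * L3 h x y - L2 a h b x y * L3 h x y) / (2 * a)) := by
  have hu := hu_x a b x y
  have hv := hv_x a h b x y
  have hw := hw_x h x y
  have hB := ((hu.const_mul (1/2 : ℝ)).mul hv).mul hw
  have H := ((((hw.pow 2).mul hu).add hB).const_mul (a*(1 - h/b))).sub
    (((hv.mul (hw.pow 2)).add hB).const_mul (a*h/b))
  rw [pdx]
  have H' : HasDerivAt (fun t => Ny3 a h b t y) _ x := H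
  rw [H'.deriv]
  norm_num
  field_simp
  ring

lemma pdy_Ny2 (a h b x y : ℝ) (ha : a ≠ 0) (hb : b ≠ 0) (hh : h ≠ 0) :
    pdy (Ny2 a h b) x y =
      (a * h / b) * (-(2 * L2 a h b x y * (1/h - 1/b) * L3 h x y)
          + L2 a h b x y ^ 2 / h
          + (1/2) * (-(L2 a h b x y * L3 h x y) / b
              - L1 a b x y * (1/h - 1/b) * L3 h x y
              + L1 a b x y * L2 a h b x y / h))
        + a * (-(L2 a h b x y ^ 2) / b
          - 2 * L1 a b x y * L2 a h b x y * (1/h - 1/b)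
          + (1/2) * (-(L2 a h b x y * L3 h x y) / b
              - L1 a b x y * (1/h - 1/b) * L3 h x y
              + L1 a b x y * L2 a h b x y / h)) := by
  have hu := hu_y a b x y
  have hv := hv_y a h b x y
  have hw := hw_y h x y
  have hB := ((hu.const_mul (1/2 : ℝ)).mul hv).mul hw
  have H := ((((hv.pow 2).mul hw).add hB).const_mul (a*h/b)).add
    (((hu.mul (hv.pow 2)).add hB).const_mul a)
  rw [pdy]
  have H' : HasDerivAt (fun t => Ny2 a h b x t) _ y := H
  rw [H'.deriv]
  norm_num
  field_simp
  ring

lemma pdy_Ny3 (a h b x y : ℝ) (ha : a ≠ 0) (hb : b ≠ 0) (hh : h ≠ 0) :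
    pdy (Ny3 a h b) x y =
      a * (1 - h / b) * (2 * L3 h x y * L1 a b x y / h
          - L3 h x y ^ 2 / b
          + (1/2) * (-(L2 a h b x y * L3 h x y) / b
              - L1 a b x y * (1/h - 1/b) * L3 h x y
              + L1 a b x y * L2 a h b x y / h))
        - (a * h / b) * (-((1/h - 1/b) * L3 h x y ^ 2)
          + 2 * L2 a h b x y * L3 h x y / h
          + (1/2) * (-(L2 a h b x y * L3 h x y) / b
              - L1 a b x y * (1/h - 1/b) * L3 h x y
              + L1 a b x y * L2 a h b x y / h)) := by
  have hu := hu_y a b x y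
  have hv := hv_y a h b x y
  have hw := hw_y h x y
  have hB := ((hu.const_mul (1/2 : ℝ)).mul hv).mul hw
  have H := ((((hw.pow 2).mul hu).add hB).const_mul (a*(1 - h/b))).sub
    (((hv.mul (hw.pow 2)).add hB).const_mul (a*h/b))
  rw [pdy]
  have H' : HasDerivAt (fun t => Ny3 a h b x t) _ y := H
  rw [H'.deriv]
  norm_num
  field_simp
  ring

end helpers

set_option maxHeartbeats 2000000 in
/-- Kronecker delta property of the rotational shape functions `Ny2`, `Ny3`
at the nodes `P1 = (0,0)`, `P2 = (a,0)`, `P3 = (a(1-h/b), h)`. -/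
theorem Ny2_Ny3_kronecker_delta (a h b : ℝ) (ha : 0 < a) (hh : 0 < h) (hb : h ≤ b) :
    (Ny2 a h b 0 0 = 0 ∧ Ny2 a h b a 0 = 0 ∧ Ny2 a h b (a * (1 - h / b)) h = 0) ∧
    (Ny3 a h b 0 0 = 0 ∧ Ny3 a h b a 0 = 0 ∧ Ny3 a h b (a * (1 - h / b)) h = 0) ∧
    (pdy (Ny2 a h b) 0 0 = 0 ∧ pdy (Ny2 a h b) a 0 = 0 ∧
      pdy (Ny2 a h b) (a * (1 - h / b)) h = 0) ∧
    (pdy (Ny3 a h b) 0 0 = 0 ∧ pdy (Ny3 a h b) a 0 = 0 ∧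
      pdy (Ny3 a h b) (a * (1 - h / b)) h = 0) ∧
    (pdx (Ny2 a h b) a 0 = -1 ∧ pdx (Ny2 a h b) 0 0 = 0 ∧
      pdx (Ny2 a h b) (a * (1 - h / b)) h = 0) ∧
    (pdx (Ny3 a h b) (a * (1 - h / b)) h = -1 ∧ pdx (Ny3 a h b) 0 0 = 0 ∧
      pdx (Ny3 a h b) a 0 = 0) := by
  have ha' : a ≠ 0 := ne_of_gt ha
  have hh' : h ≠ 0 := ne_of_gt hh
  have hb0 : (0:ℝ) < b := lt_of_lt_of_le hh hb
  have hb' : b ≠ 0 := ne_of_gt hb0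
  refine ⟨⟨?_, ?_, ?_⟩, ⟨?_, ?_, ?_⟩, ⟨?_, ?_, ?_⟩, ⟨?_, ?_, ?_⟩, ⟨?_, ?_, ?_⟩,
    ⟨?_, ?_, ?_⟩⟩
  · simp [Ny2, L1, L2, L3]
  · simp [Ny2, L1, L2, L3, ha']
  · simp only [Ny2, L1, L2, L3]; field_simp <;> ring
  · simp [Ny3, L1, L2, L3]
  · simp [Ny3, L1, L2, L3, ha']
  · simp only [Ny3, L1, L2, L3]; field_simp <;> ring
  · rw [pdy_Ny2 a h b _ _ ha' hb' hh']; simp only [L1, L2, L3]; field_simp <;> ring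
  · rw [pdy_Ny2 a h b _ _ ha' hb' hh']; simp only [L1, L2, L3]; field_simp <;> ring
  · rw [pdy_Ny2 a h b _ _ ha' hb' hh']; simp only [L1, L2, L3]; field_simp <;> ring
  · rw [pdy_Ny3 a h b _ _ ha' hb' hh']; simp only [L1, L2, L3]; field_simp <;> ring
  · rw [pdy_Ny3 a h b _ _ ha' hb' hh']; simp only [L1, L2, L3]; field_simp <;> ring
  · rw [pdy_Ny3 a h b _ _ ha' hb' hh']; simp only [L1, L2, L3]; field_simp <;> ring
  · rw [pdx_Ny2 a h b _ _ ha' hb']; simp only [L1, L2, L3]; field_simp <;> ring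
  · rw [pdx_Ny2 a h b _ _ ha' hb']; simp only [L1, L2, L3]; field_simp <;> ring
  · rw [pdx_Ny2 a h b _ _ ha' hb']; simp only [L1, L2, L3]; field_simp <;> ring
  · rw [pdx_Ny3 a h b _ _ ha' hb']; simp only [L1, L2, L3]; field_simp <;> ring
  · rw [pdx_Ny3 a h b _ _ ha' hb']; simp only [L1, L2, L3]; field_simp <;> ring
  · rw [pdx_Ny3 a h b _ _ ha' hb']; simp only [L1, L2, L3]; field_simp <;> ring
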